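/- Let α > 0 be a non-integer real number, let m = ⌈α⌉, let n ∈ ℕ with 2n ≥ m, and let x > 0. Then the left-sided Caputo fractional derivative of order α (with base point 0) of the thin-plate spline τ ↦ τ^(2n) ln τ satisfies (1/Γ(m-α)) ∫_0^x (x - τ)^(m-α-1) g_m(τ) dτ = (Γ(2n+1)/Γ(2n+1-α)) · x^(2n-α) · ( ln(x) + Ψ(2n-m+1) - Ψ(2n+1-α) + m! · Γ(2n-m+1) · Σ_{r=1}^{m} (-1)^(r-1) / (r · (m-r)! · Γ(2n-m+r+1)) ), where g_m(τ) = (Γ(2n+1)/Γ(2n-m+1)) τ^(2n-m) ln(τ) + m! · Γ(2n+1) · τ^(2n-m) · Σ_{r=1}^{m} (-1)^(r-1) / (r · (m-r)! · Γ(2n-m+r+1)) is the m-th derivative of τ ↦ τ^(2n) ln τ on (0, ∞), and Ψ(t) = Γ'(t)/Γ(t) is the digamma function. -/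

import Mathlib

open MeasureTheory Real Set Filter Topology

noncomputable def bfun (β : ℝ) : ℝ → ℂ :=
  fun t => ((Set.indicator (Set.Ioo (0:ℝ) 1) (fun u => (1-u) ^ (β-1)) t : ℝ) : ℂ)

lemma bfun_eq (β : ℝ) : ∀ t : ℝ, ∀ s : ℂ, (t:ℂ) ^ (s-1) • bfun β t
      = Set.indicator (Set.Ioo (0:ℝ) 1)
        (fun t : ℝ => (t:ℂ) ^ (s-1) * ((1:ℂ)-t) ^ ((β:ℂ)-1)) t := by
  intro t s
  rw [bfun]
  by_cases ht : t ∈ Set.Ioo (0:ℝ) 1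
  · rw [Set.indicator_of_mem ht, Set.indicator_of_mem ht, smul_eq_mul]
    congr 1
    rw [show ((1:ℂ)-t) = ((1-t : ℝ) : ℂ) by push_cast; ring,
      show ((β:ℂ)-1) = ((β-1 : ℝ) : ℂ) by push_cast; ring,
      ← Complex.ofReal_cpow (by linarith [ht.2] : (0:ℝ) ≤ 1 - t)]
  · rw [Set.indicator_of_notMem ht, Set.indicator_of_notMem ht]
    simp

lemma mellin_bfun (β : ℝ) (s : ℂ) :
    mellin (bfun β) s = Complex.betaIntegral s β := by
  rw [mellin, Complex.betaIntegral,
    intervalIntegral.integral_of_le (zero_le_one' ℝ),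
    MeasureTheory.integral_Ioc_eq_integral_Ioo]
  simp_rw [bfun_eq β]
  rw [MeasureTheory.setIntegral_indicator measurableSet_Ioo]
  congr 1
  rw [Set.inter_eq_right.mpr]
  intro t ht; exact ht.1

lemma integrableOn_rpow_one_sub (β : ℝ) (hβ : 0 < β) :
    IntegrableOn (fun u : ℝ => (1-u) ^ (β-1)) (Set.Ioo (0:ℝ) 1) := by
  have h1 : IntervalIntegrable (fun u : ℝ => u ^ (β-1)) volume 0 1 :=
    intervalIntegral.intervalIntegrable_rpow' (by linarith)
  have h2 := h1.comp_sub_left 1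
  simp only [sub_zero, sub_self] at h2
  have h3 : IntervalIntegrable (fun u : ℝ => (1-u) ^ (β-1)) volume 0 1 := h2.symm
  rw [intervalIntegrable_iff, uIoc_of_le (zero_le_one' ℝ)] at h3
  exact h3.mono_set Set.Ioo_subset_Ioc_self

lemma bfun_integrable (β : ℝ) (hβ : 0 < β) : Integrable (bfun β) := by
  exact ((integrableOn_rpow_one_sub β hβ).integrable_indicator measurableSet_Ioo).ofReal

lemma bfun_locInt (β : ℝ) (hβ : 0 < β) : LocallyIntegrableOn (bfun β) (Set.Ioi 0) :=
  ((bfun_integrable β hβ).locallyIntegrable).locallyIntegrableOn _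

lemma bfun_top (β : ℝ) (a : ℝ) : bfun β =O[atTop] (fun x : ℝ => x ^ (-a)) := by
  have h : bfun β =ᶠ[atTop] (fun _ => (0:ℂ)) := by
    filter_upwards [eventually_ge_atTop (1:ℝ)] with t ht
    simp [bfun, Set.indicator_of_notMem, Set.mem_Ioo, not_and, not_lt, ht]
  exact h.trans_isBigO (Asymptotics.isBigO_zero _ _)

lemma bfun_bot (β : ℝ) (hβ : 0 < β) : bfun β =O[𝓝[>] (0:ℝ)] (fun x : ℝ => x ^ (-(0:ℝ))) := by
  refine Asymptotics.IsBigO.of_bound ((1/2 : ℝ) ^ (β-1) + 1) ?_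
  have hmem : Set.Ioo (0:ℝ) (1/2) ∈ 𝓝[>] (0:ℝ) := by
    apply Ioo_mem_nhdsGT_of_mem
    constructor <;> norm_num
  filter_upwards [hmem] with t ht
  rw [neg_zero, Real.rpow_zero, norm_one, mul_one]
  have h1 : ‖bfun β t‖ = |Set.indicator (Set.Ioo (0:ℝ) 1) (fun u => (1-u) ^ (β-1)) t| := by
    rw [bfun, Complex.norm_real, Real.norm_eq_abs]
  rw [h1, Set.indicator_of_mem (by constructor; exact ht.1; linarith [ht.2] : t ∈ Set.Ioo (0:ℝ) 1)]
  rw [abs_of_nonneg (Real.rpow_nonneg (by linarith [ht.2]) _)]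
  rcases le_or_gt β 1 with hb | hb
  · have : (1-t) ^ (β-1) ≤ (1/2 : ℝ) ^ (β-1) :=
      Real.rpow_le_rpow_of_nonpos (by norm_num) (by linarith [ht.2]) (by linarith)
    linarith
  · have : (1-t) ^ (β-1) ≤ 1 := Real.rpow_le_one (by linarith [ht.2]) (by linarith [ht.1]) (by linarith)
    have h0 : (0:ℝ) ≤ (1/2 : ℝ) ^ (β-1) := Real.rpow_nonneg (by norm_num) _
    linarith

lemma bfun_hasDerivAt (β : ℝ) (hβ : 0 < β) (k : ℕ) :
    MellinConvergent (fun t => Real.log t • bfun β t) ((k:ℂ)+1) ∧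
      HasDerivAt (mellin (bfun β))
        (mellin (fun t => Real.log t • bfun β t) ((k:ℂ)+1)) ((k:ℂ)+1) := by
  refine mellin_hasDerivAt_of_isBigO_rpow (a := (k:ℝ)+2) (b := 0)
    (bfun_locInt β hβ) (bfun_top β _) ?_ (bfun_bot β hβ) ?_
  · simp only [Complex.add_re, Complex.natCast_re, Complex.one_re]
    linarith
  · simp only [Complex.add_re, Complex.natCast_re, Complex.one_re]
    positivity

lemma Gamma_ne_zero_of_re_pos {s : ℂ} (hs : 0 < s.re) : Complex.Gamma s ≠ 0 := by
  apply Complex.Gamma_ne_zero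
  intro m hm
  rw [hm] at hs
  simp only [Complex.neg_re, Complex.natCast_re] at hs
  have : (0:ℝ) ≤ (m:ℝ) := Nat.cast_nonneg m
  linarith

lemma mellin_bfun_eq_G (β : ℝ) (hβ : 0 < β) {s : ℂ} (hs : 0 < s.re) :
    mellin (bfun β) s = Complex.Gamma s * Complex.Gamma β / Complex.Gamma (s + β) := by
  rw [mellin_bfun]
  have hb : (0:ℝ) < (β:ℂ).re := by simpa using hβ
  have h := Complex.Gamma_mul_Gamma_eq_betaIntegral hs hb
  have hne : Complex.Gamma (s + β) ≠ 0 := by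
    apply Gamma_ne_zero_of_re_pos
    simp only [Complex.add_re, Complex.ofReal_re]
    linarith
  field_simp [h]
  linear_combination -h

lemma mellin_log_eq (β : ℝ) (hβ : 0 < β) (k : ℕ) :
    mellin (fun t => Real.log t • bfun β t) ((k:ℂ)+1) =
      (deriv Complex.Gamma ((k:ℂ)+1) * Complex.Gamma β * Complex.Gamma ((k:ℂ)+1+β)
        - Complex.Gamma ((k:ℂ)+1) * Complex.Gamma β * deriv Complex.Gamma ((k:ℂ)+1+β))
        / Complex.Gamma ((k:ℂ)+1+β) ^ 2 := by
  set s₀ : ℂ := (k:ℂ)+1 with hs₀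
  have hs₀re : 0 < s₀.re := by
    simp only [hs₀, Complex.add_re, Complex.natCast_re, Complex.one_re]; positivity
  have hsβre : 0 < (s₀ + β).re := by
    simp only [Complex.add_re, Complex.ofReal_re]; linarith
  have hne : Complex.Gamma (s₀ + β) ≠ 0 := Gamma_ne_zero_of_re_pos hsβre
  have hd1 : HasDerivAt Complex.Gamma (deriv Complex.Gamma s₀) s₀ :=
    (Complex.differentiableAt_Gamma s₀ (fun m => by
      intro hm; rw [hm] at hs₀re
      simp only [Complex.neg_re, Complex.natCast_re] at hs₀re
      have : (0:ℝ) ≤ (m:ℝ) := Nat.cast_nonneg m; linarith)).hasDerivAt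
  have hd2' : HasDerivAt Complex.Gamma (deriv Complex.Gamma (s₀+β)) (s₀+β) :=
    (Complex.differentiableAt_Gamma _ (fun m => by
      intro hm; rw [hm] at hsβre
      simp only [Complex.neg_re, Complex.natCast_re] at hsβre
      have : (0:ℝ) ≤ (m:ℝ) := Nat.cast_nonneg m; linarith)).hasDerivAt
  have hd2 : HasDerivAt (fun s : ℂ => Complex.Gamma (s + β))
      (deriv Complex.Gamma (s₀+β)) s₀ := hd2'.comp_add_const
  have hG : HasDerivAt (fun s : ℂ => Complex.Gamma s * Complex.Gamma β / Complex.Gamma (s + β))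
      ((deriv Complex.Gamma s₀ * Complex.Gamma β * Complex.Gamma (s₀+β)
        - Complex.Gamma s₀ * Complex.Gamma β * deriv Complex.Gamma (s₀+β))
        / Complex.Gamma (s₀+β) ^ 2) s₀ :=
    (hd1.mul_const _).div hd2 hne
  have hev : mellin (bfun β) =ᶠ[𝓝 s₀]
      (fun s : ℂ => Complex.Gamma s * Complex.Gamma β / Complex.Gamma (s + β)) := by
    have hopen : IsOpen {s : ℂ | 0 < s.re} := isOpen_lt continuous_const Complex.continuous_re
    filter_upwards [hopen.mem_nhds hs₀re] with s hs
    exact mellin_bfun_eq_G β hβ hs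
  have hmd : HasDerivAt (mellin (bfun β))
      ((deriv Complex.Gamma s₀ * Complex.Gamma β * Complex.Gamma (s₀+β)
        - Complex.Gamma s₀ * Complex.Gamma β * deriv Complex.Gamma (s₀+β))
        / Complex.Gamma (s₀+β) ^ 2) s₀ := hG.congr_of_eventuallyEq hev
  exact ((bfun_hasDerivAt β hβ k).2.unique hmd)

lemma deriv_Gamma_complex_real {x : ℝ} (hx : 0 < x) :
    deriv Complex.Gamma (x:ℂ) = ((deriv Real.Gamma x : ℝ) : ℂ) := by
  have hc : DifferentiableAt ℂ Complex.Gamma (x:ℂ) :=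
    Complex.differentiableAt_Gamma _ (fun m => by
      intro hm
      have : ((x:ℂ)).re = ((-(m:ℂ)):ℂ).re := by rw [hm]
      simp only [Complex.ofReal_re, Complex.neg_re, Complex.natCast_re] at this
      have h0 : (0:ℝ) ≤ (m:ℝ) := Nat.cast_nonneg m
      linarith)
  have hr : DifferentiableAt ℝ Real.Gamma x :=
    Real.differentiableAt_Gamma (fun m => by
      have h0 : (0:ℝ) ≤ (m:ℝ) := Nat.cast_nonneg m
      intro h; rw [h] at hx; linarith)
  have h1 : HasDerivAt (fun y : ℝ => Complex.Gamma (y:ℂ)) (deriv Complex.Gamma (x:ℂ)) x :=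
    hc.hasDerivAt.comp_ofReal
  have h2 : HasDerivAt (fun y : ℝ => ((Real.Gamma y : ℝ) : ℂ)) ((deriv Real.Gamma x : ℝ) : ℂ) x :=
    hr.hasDerivAt.ofReal_comp
  have heq : (fun y : ℝ => Complex.Gamma (y:ℂ)) = (fun y : ℝ => ((Real.Gamma y : ℝ) : ℂ)) := by
    funext y; exact Complex.Gamma_ofReal y
  rw [heq] at h1
  exact h1.unique h2

lemma bfun_log_eq (β : ℝ) (k : ℕ) : ∀ t : ℝ,
    (t:ℂ) ^ ((k:ℂ)+1-1) • (Real.log t • bfun β t)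
      = Set.indicator (Set.Ioo (0:ℝ) 1)
        (fun t : ℝ => ((t ^ k * Real.log t * (1-t) ^ (β-1) : ℝ) : ℂ)) t := by
  intro t
  rw [bfun]
  by_cases ht : t ∈ Set.Ioo (0:ℝ) 1
  · rw [Set.indicator_of_mem ht, Set.indicator_of_mem ht]
    rw [add_sub_cancel_right, Complex.cpow_natCast]
    push_cast
    rw [smul_eq_mul, Complex.real_smul]
    ring
  · rw [Set.indicator_of_notMem ht, Set.indicator_of_notMem ht]
    simp

lemma mellin_log_ofReal (β : ℝ) (k : ℕ) :
    mellin (fun t => Real.log t • bfun β t) ((k:ℂ)+1)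
      = ((∫ u in Set.Ioo (0:ℝ) 1, u ^ k * Real.log u * (1-u) ^ (β-1) : ℝ) : ℂ) := by
  rw [mellin]
  simp_rw [bfun_log_eq β k]
  rw [MeasureTheory.setIntegral_indicator measurableSet_Ioo,
    Set.inter_eq_right.mpr (fun t ht => ht.1)]
  exact integral_ofReal (𝕜 := ℂ)

lemma j1_integrable (β : ℝ) (hβ : 0 < β) (k : ℕ) :
    IntegrableOn (fun u : ℝ => u ^ k * Real.log u * (1-u) ^ (β-1)) (Set.Ioo (0:ℝ) 1) := by
  have h := (bfun_hasDerivAt β hβ k).1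
  rw [MellinConvergent] at h
  have h2 : IntegrableOn (Set.indicator (Set.Ioo (0:ℝ) 1)
      (fun t : ℝ => ((t ^ k * Real.log t * (1-t) ^ (β-1) : ℝ) : ℂ))) (Set.Ioi (0:ℝ)) := by
    apply h.congr_fun _ measurableSet_Ioi
    intro t _
    exact bfun_log_eq β k t
  have h3 : IntegrableOn (fun t : ℝ => ((t ^ k * Real.log t * (1-t) ^ (β-1) : ℝ) : ℂ))
      (Set.Ioo (0:ℝ) 1) := by
    have h5 := (MeasureTheory.integrable_indicator_iff measurableSet_Ioo).mp h2
    rw [MeasureTheory.IntegrableOn, MeasureTheory.Measure.restrict_restrict measurableSet_Ioo,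
      Set.inter_eq_left.mpr (fun t ht => ht.1)] at h5
    exact h5
  have h4 := h3.re
  apply h4.congr
  filter_upwards with t
  exact Complex.ofReal_re _

lemma bfun_pow_eq (β : ℝ) (k : ℕ) : ∀ t : ℝ,
    (t:ℂ) ^ ((k:ℂ)+1-1) • bfun β t
      = Set.indicator (Set.Ioo (0:ℝ) 1)
        (fun t : ℝ => ((t ^ k * (1-t) ^ (β-1) : ℝ) : ℂ)) t := by
  intro t
  rw [bfun]
  by_cases ht : t ∈ Set.Ioo (0:ℝ) 1
  · rw [Set.indicator_of_mem ht, Set.indicator_of_mem ht]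
    rw [add_sub_cancel_right, Complex.cpow_natCast, smul_eq_mul]
    push_cast
    ring
  · rw [Set.indicator_of_notMem ht, Set.indicator_of_notMem ht]
    simp

lemma mellin_pow_ofReal (β : ℝ) (k : ℕ) :
    mellin (bfun β) ((k:ℂ)+1)
      = ((∫ u in Set.Ioo (0:ℝ) 1, u ^ k * (1-u) ^ (β-1) : ℝ) : ℂ) := by
  rw [mellin]
  simp_rw [bfun_pow_eq β k]
  rw [MeasureTheory.setIntegral_indicator measurableSet_Ioo,
    Set.inter_eq_right.mpr (fun t ht => ht.1)]
  exact integral_ofReal (𝕜 := ℂ)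

lemma kpos (β : ℝ) (hβ : 0 < β) (k : ℕ) :
    (0:ℝ) < (k:ℝ)+1 ∧ (0:ℝ) < (k:ℝ)+1+β := by
  constructor <;> [positivity; positivity]

lemma J0_val (β : ℝ) (hβ : 0 < β) (k : ℕ) :
    (∫ u in Set.Ioo (0:ℝ) 1, u ^ k * (1-u) ^ (β-1))
      = Real.Gamma ((k:ℝ)+1) * Real.Gamma β / Real.Gamma ((k:ℝ)+1+β) := by
  have hs : (0:ℝ) < (((k:ℂ)+1)).re := by
    simp only [Complex.add_re, Complex.natCast_re, Complex.one_re]; positivity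
  have hc := mellin_bfun_eq_G β hβ hs
  rw [mellin_pow_ofReal] at hc
  have e1 : ((k:ℂ)+1) = (((k:ℝ)+1 : ℝ) : ℂ) := by push_cast; ring
  have e2 : ((k:ℂ)+1+(β:ℂ)) = (((k:ℝ)+1+β : ℝ) : ℂ) := by push_cast; ring
  rw [e2, e1, Complex.Gamma_ofReal, Complex.Gamma_ofReal, Complex.Gamma_ofReal] at hc
  have : ((∫ u in Set.Ioo (0:ℝ) 1, u ^ k * (1-u) ^ (β-1) : ℝ) : ℂ)
      = ((Real.Gamma ((k:ℝ)+1) * Real.Gamma β / Real.Gamma ((k:ℝ)+1+β) : ℝ) : ℂ) := by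
    rw [hc]; push_cast; ring
  exact_mod_cast this

lemma J1_val (β : ℝ) (hβ : 0 < β) (k : ℕ) :
    (∫ u in Set.Ioo (0:ℝ) 1, u ^ k * Real.log u * (1-u) ^ (β-1))
      = (deriv Real.Gamma ((k:ℝ)+1) * Real.Gamma ((k:ℝ)+1+β)
          - Real.Gamma ((k:ℝ)+1) * deriv Real.Gamma ((k:ℝ)+1+β))
        * Real.Gamma β / Real.Gamma ((k:ℝ)+1+β) ^ 2 := by
  have hc := mellin_log_eq β hβ k
  rw [mellin_log_ofReal] at hc
  have e1 : ((k:ℂ)+1) = (((k:ℝ)+1 : ℝ) : ℂ) := by push_cast; ring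
  have e2 : ((k:ℂ)+1+(β:ℂ)) = (((k:ℝ)+1+β : ℝ) : ℂ) := by push_cast; ring
  rw [e2, e1, Complex.Gamma_ofReal, Complex.Gamma_ofReal, Complex.Gamma_ofReal,
    deriv_Gamma_complex_real (kpos β hβ k).1, deriv_Gamma_complex_real (kpos β hβ k).2] at hc
  have : ((∫ u in Set.Ioo (0:ℝ) 1, u ^ k * Real.log u * (1-u) ^ (β-1) : ℝ) : ℂ)
      = (((deriv Real.Gamma ((k:ℝ)+1) * Real.Gamma ((k:ℝ)+1+β)
          - Real.Gamma ((k:ℝ)+1) * deriv Real.Gamma ((k:ℝ)+1+β))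
        * Real.Gamma β / Real.Gamma ((k:ℝ)+1+β) ^ 2 : ℝ) : ℂ) := by
    rw [hc]; push_cast; ring
  exact_mod_cast this

lemma j0_intervalIntegrable (β : ℝ) (hβ : 0 < β) (k : ℕ) :
    IntervalIntegrable (fun u : ℝ => u ^ k * (1-u) ^ (β-1)) volume 0 1 := by
  have h1 : IntervalIntegrable (fun u : ℝ => u ^ (β-1)) volume 0 1 :=
    intervalIntegral.intervalIntegrable_rpow' (by linarith)
  have h2 := h1.comp_sub_left 1
  simp only [sub_zero, sub_self] at h2
  exact IntervalIntegrable.continuousOn_mul h2.symm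
    (by fun_prop : ContinuousOn (fun u : ℝ => u ^ k) (Set.uIcc 0 1))

lemma j1_intervalIntegrable (β : ℝ) (hβ : 0 < β) (k : ℕ) :
    IntervalIntegrable (fun u : ℝ => u ^ k * Real.log u * (1-u) ^ (β-1)) volume 0 1 := by
  rw [intervalIntegrable_iff, Set.uIoc_of_le (zero_le_one' ℝ),
    integrableOn_Ioc_iff_integrableOn_Ioo]
  exact j1_integrable β hβ k

lemma subst_lemma (β : ℝ) (hβ : 0 < β) (k : ℕ) (x : ℝ) (hx : 0 < x) (C1 C2 : ℝ) :
    (∫ τ in (0:ℝ)..x, (x-τ) ^ (β-1) * (C1 * τ ^ k * Real.log τ + C2 * τ ^ k))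
      = x ^ (β + (k:ℝ)) *
        ((C1 * Real.log x + C2) * (∫ u in (0:ℝ)..1, u ^ k * (1-u) ^ (β-1))
          + C1 * (∫ u in (0:ℝ)..1, u ^ k * Real.log u * (1-u) ^ (β-1))) := by
  have hx0 : x ≠ 0 := ne_of_gt hx
  have h := intervalIntegral.integral_comp_mul_left
    (fun τ => (x-τ) ^ (β-1) * (C1 * τ ^ k * Real.log τ + C2 * τ ^ k)) hx0 (a := 0) (b := 1)
  simp only [mul_zero, mul_one] at h
  have h2 : (∫ u in (0:ℝ)..1,
        (x - x*u) ^ (β-1) * (C1 * (x*u) ^ k * Real.log (x*u) + C2 * (x*u) ^ k))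
      = ∫ u in (0:ℝ)..1, (x ^ (β-1) * x ^ k) *
          ((C1 * Real.log x + C2) * (u ^ k * (1-u) ^ (β-1))
            + C1 * (u ^ k * Real.log u * (1-u) ^ (β-1))) := by
    apply intervalIntegral.integral_congr_ae
    filter_upwards with u hu
    rw [Set.uIoc_of_le (zero_le_one' ℝ)] at hu
    have hu0 : 0 < u := hu.1
    have hu1 : u ≤ 1 := hu.2
    rw [show x - x*u = x * (1-u) by ring,
      Real.mul_rpow (le_of_lt hx) (by linarith),
      Real.log_mul hx0 (ne_of_gt hu0), mul_pow]
    ring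
  rw [h2] at h
  rw [intervalIntegral.integral_const_mul,
    intervalIntegral.integral_add
      (((j0_intervalIntegrable β hβ k).const_mul _))
      (((j1_intervalIntegrable β hβ k).const_mul _)),
    intervalIntegral.integral_const_mul, intervalIntegral.integral_const_mul] at h
  -- h : (above) = x⁻¹ • ∫ τ in 0..x, f τ
  rw [smul_eq_mul] at h
  have h3 : (∫ τ in (0:ℝ)..x, (x-τ) ^ (β-1) * (C1 * τ ^ k * Real.log τ + C2 * τ ^ k))
      = x * (x ^ (β-1) * x ^ k *
          ((C1 * Real.log x + C2) * (∫ u in (0:ℝ)..1, u ^ k * (1-u) ^ (β-1))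
            + C1 * (∫ u in (0:ℝ)..1, u ^ k * Real.log u * (1-u) ^ (β-1)))) := by
    rw [h, ← mul_assoc, mul_inv_cancel₀ hx0, one_mul]
  rw [h3, show β + (k:ℝ) = 1 + (β-1) + (k:ℝ) by ring, Real.rpow_add hx, Real.rpow_add hx,
    Real.rpow_one, Real.rpow_natCast]
  ring

theorem caputo_derivative_thin_plate_zero (α : ℝ) (hα : 0 < α) (hαni : ∀ j : ℤ, α ≠ j)
    (m : ℕ) (hm : m = ⌈α⌉₊) (n : ℕ) (hmn : m ≤ 2 * n) (x : ℝ) (hx : 0 < x) :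
    (1 / Real.Gamma ((m : ℝ) - α)) *
      ∫ τ in (0 : ℝ)..x, (x - τ) ^ ((m : ℝ) - α - 1) *
        ((Real.Gamma (2 * n + 1) / Real.Gamma (2 * n - (m : ℝ) + 1)) *
            τ ^ (2 * n - m) * Real.log τ +
          (m.factorial : ℝ) * Real.Gamma (2 * n + 1) * τ ^ (2 * n - m) *
            ∑ r ∈ Finset.Icc 1 m,
              (-1 : ℝ) ^ (r - 1) /
                (r * (m - r).factorial * Real.Gamma (2 * n - (m : ℝ) + r + 1))) =
      (Real.Gamma (2 * n + 1) / Real.Gamma (2 * n + 1 - α)) * x ^ (2 * (n : ℝ) - α) *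
        (Real.log x +
          deriv Real.Gamma (2 * n - (m : ℝ) + 1) / Real.Gamma (2 * n - (m : ℝ) + 1) -
          deriv Real.Gamma (2 * n + 1 - α) / Real.Gamma (2 * n + 1 - α) +
          (m.factorial : ℝ) * Real.Gamma (2 * n - (m : ℝ) + 1) *
            ∑ r ∈ Finset.Icc 1 m,
              (-1 : ℝ) ^ (r - 1) /
                (r * (m - r).factorial * Real.Gamma (2 * n - (m : ℝ) + r + 1))) := by
  set S : ℝ := ∑ r ∈ Finset.Icc 1 m,
      (-1 : ℝ) ^ (r - 1) /
        (r * (m - r).factorial * Real.Gamma (2 * n - (m : ℝ) + r + 1)) with hS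
  set β : ℝ := (m : ℝ) - α with hβdef
  set k : ℕ := 2 * n - m with hkdef
  -- basic facts
  have hαm : α ≤ (m : ℝ) := by rw [hm]; exact Nat.le_ceil α
  have hαne : α ≠ (m : ℝ) := by
    have := hαni (m : ℤ)
    simpa using this
  have hβ : 0 < β := by
    rw [hβdef]
    rcases lt_or_eq_of_le hαm with h | h
    · linarith
    · exact absurd h hαne
  have hk : (k : ℝ) = 2 * (n : ℝ) - (m : ℝ) := by
    rw [hkdef]
    push_cast [Nat.cast_sub hmn]
    ring
  set A : ℝ := Real.Gamma (2 * n + 1) / Real.Gamma (2 * n - (m : ℝ) + 1) with hA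
  set C2 : ℝ := (m.factorial : ℝ) * Real.Gamma (2 * n + 1) * S with hC2
  have hcongr : (∫ τ in (0 : ℝ)..x, (x - τ) ^ ((m : ℝ) - α - 1) *
        (A * τ ^ (2 * n - m) * Real.log τ +
          (m.factorial : ℝ) * Real.Gamma (2 * n + 1) * τ ^ (2 * n - m) * S))
      = ∫ τ in (0 : ℝ)..x, (x - τ) ^ (β - 1) * (A * τ ^ k * Real.log τ + C2 * τ ^ k) := by
    apply intervalIntegral.integral_congr
    intro τ _
    rw [hβdef, hC2, hkdef]
    ring
  rw [hcongr, subst_lemma β hβ k x hx A C2]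
  -- values of the two model integrals
  have hIoo0 : (∫ u in (0:ℝ)..1, u ^ k * (1-u) ^ (β-1))
      = ∫ u in Set.Ioo (0:ℝ) 1, u ^ k * (1-u) ^ (β-1) := by
    rw [intervalIntegral.integral_of_le (zero_le_one' ℝ),
      MeasureTheory.integral_Ioc_eq_integral_Ioo]
  have hIoo1 : (∫ u in (0:ℝ)..1, u ^ k * Real.log u * (1-u) ^ (β-1))
      = ∫ u in Set.Ioo (0:ℝ) 1, u ^ k * Real.log u * (1-u) ^ (β-1) := by
    rw [intervalIntegral.integral_of_le (zero_le_one' ℝ),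
      MeasureTheory.integral_Ioc_eq_integral_Ioo]
  rw [hIoo0, hIoo1, J0_val β hβ k, J1_val β hβ k]
  -- rewrite Gamma arguments
  have e1 : (k:ℝ) + 1 = 2 * (n:ℝ) - (m : ℝ) + 1 := by rw [hk]
  have e2 : (k:ℝ) + 1 + β = 2 * (n:ℝ) + 1 - α := by rw [hk, hβdef]; ring
  have e3 : β + (k:ℝ) = 2 * (n:ℝ) - α := by rw [hk, hβdef]; ring
  rw [e2, e1, e3]
  -- names
  set G1 : ℝ := Real.Gamma (2 * (n:ℝ) - (m : ℝ) + 1) with hG1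
  set G2 : ℝ := Real.Gamma (2 * (n:ℝ) + 1 - α) with hG2
  set G1' : ℝ := deriv Real.Gamma (2 * (n:ℝ) - (m : ℝ) + 1) with hG1'
  set G2' : ℝ := deriv Real.Gamma (2 * (n:ℝ) + 1 - α) with hG2'
  have hG1pos : 0 < G1 := Real.Gamma_pos_of_pos (by
    have : (m:ℝ) ≤ 2 * (n:ℝ) := by exact_mod_cast hmn
    linarith)
  have hG2pos : 0 < G2 := Real.Gamma_pos_of_pos (by
    have : α < (m:ℝ) := lt_of_le_of_ne hαm hαne
    have : (m:ℝ) ≤ 2 * (n:ℝ) := by exact_mod_cast hmn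
    nlinarith [lt_of_le_of_ne hαm hαne])
  have hGβpos : 0 < Real.Gamma β := Real.Gamma_pos_of_pos hβ
  have h1 : G1 ≠ 0 := ne_of_gt hG1pos
  have h2 : G2 ≠ 0 := ne_of_gt hG2pos
  have h3 : Real.Gamma β ≠ 0 := ne_of_gt hGβpos
  rw [hA, hC2]
  field_simp
  ring
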